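/- Let k ∈ {1,2} and let w₁, …, w₅ : (0,∞) → (0,∞) be decreasing functions with w₁(r)w₂(r)w₃(r)w₄(r)w₅(r) = r^{-2} for all r > 0. Then there is an absolute constant C > 0 such that for all measurable ψ₁, …, ψ₅ : (0,∞) → ℂ, ‖N_{5,k}(ψ₁,…,ψ₅)‖_{L²} ≤ C ∏_{j=1}^{5} ‖w_j ψ_j‖_{L²}. -/

import Mathlib

open MeasureTheory Set
open scoped ENNReal

/-- The measure `2π r dr` on `(0,∞)`. -/
noncomputable def rmeas : Measure ℝ :=
  (volume.restrict (Set.Ioi (0:ℝ))).withDensity (fun r => ENNReal.ofReal (2 * Real.pi * r))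

/-- `Re(conj ψ₁ ψ₂)(r)`. -/
noncomputable def Re2 (ψ₁ ψ₂ : ℝ → ℂ) (r : ℝ) : ℝ := ((starRingEnd ℂ) (ψ₁ r) * ψ₂ r).re

/-- `A_θ[ψ₁,ψ₂](r) = -(1/2)∫₀^r Re(conj ψ₁ ψ₂)(r') r' dr'`. -/
noncomputable def Atheta2 (ψ₁ ψ₂ : ℝ → ℂ) (r : ℝ) : ℝ :=
  -(1/2) * ∫ t in (0:ℝ)..r, Re2 ψ₁ ψ₂ t * t

/-- The quintic nonlinearities `N_{5,1}`, `N_{5,2}`. -/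
noncomputable def N5 (k : ℕ) (ψ₁ ψ₂ ψ₃ ψ₄ ψ₅ : ℝ → ℂ) (r : ℝ) : ℂ :=
  match k with
  | 1 => ((Atheta2 ψ₁ ψ₂ r * Atheta2 ψ₃ ψ₄ r / r ^ 2 : ℝ) : ℂ) * ψ₅ r
  | _ => -(((∫ t in Set.Ioi r, Atheta2 ψ₁ ψ₂ t * Re2 ψ₃ ψ₄ t / t) : ℝ) : ℂ) * ψ₅ r

open scoped NNReal

theorem Real.ennnorm_eq_ofReal_abs (r : ℝ) : (‖r‖₊ : ℝ≥0∞) = ENNReal.ofReal |r| :=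
  Real.enorm_eq_ofReal_abs r

theorem Real.ennnorm_eq_ofReal {r : ℝ} (hr : 0 ≤ r) : (‖r‖₊ : ℝ≥0∞) = ENNReal.ofReal r :=
  Real.enorm_eq_ofReal hr

theorem ofReal_norm_eq_coe_nnnorm {E : Type*} [SeminormedAddGroup E] (a : E) :
    ENNReal.ofReal ‖a‖ = (‖a‖₊ : ℝ≥0∞) :=
  ofReal_norm a

theorem ennnorm_integral_le_lintegral_ennnorm {α : Type*} [MeasurableSpace α] {μ : Measure α}
    (f : α → ℝ) : (‖∫ a, f a ∂μ‖₊ : ℝ≥0∞) ≤ ∫⁻ a, ‖f a‖₊ ∂μ :=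
  enorm_integral_le_lintegral_enorm f

theorem Measurable.ennnorm {α : Type*} [MeasurableSpace α] {f : α → ℂ} (hf : Measurable f) :
    Measurable fun a => (‖f a‖₊ : ℝ≥0∞) :=
  hf.enorm

theorem eLpNorm_eq_lintegral_rpow_nnnorm {α : Type*} [MeasurableSpace α] {μ : Measure α}
    {p : ℝ≥0∞} (hp_ne_zero : p ≠ 0) (hp_ne_top : p ≠ ∞) {f : α → ℂ} :
    eLpNorm f p μ = (∫⁻ x, (‖f x‖₊ : ℝ≥0∞) ^ p.toReal ∂μ) ^ (1 / p.toReal) :=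
  eLpNorm_eq_lintegral_rpow_enorm_toReal hp_ne_zero hp_ne_top

namespace QuinticAux

noncomputable def Wn (w : ℝ → ℝ) (ψ : ℝ → ℂ) : ℝ≥0∞ :=
  eLpNorm (fun r => ((w r : ℝ) : ℂ) * ψ r) 2 rmeas

lemma meas_density : Measurable (fun r : ℝ => ENNReal.ofReal (2 * Real.pi * r)) := by
  fun_prop

lemma rmeas_lintegral {f : ℝ → ℝ≥0∞} (hf : AEMeasurable f (volume.restrict (Ioi (0:ℝ)))) :
    ∫⁻ x, f x ∂rmeas = ∫⁻ t in Ioi (0:ℝ), f t * ENNReal.ofReal (2 * Real.pi * t) := by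
  rw [rmeas, lintegral_withDensity_eq_lintegral_mul₀' meas_density.aemeasurable
    (hf.mono_ac (withDensity_absolutelyContinuous _ _))]
  exact lintegral_congr fun t => mul_comm _ _

lemma ofReal_mul_inv_self {a : ℝ} (ha : 0 < a) :
    ENNReal.ofReal a * ENNReal.ofReal a⁻¹ = 1 := by
  rw [← ENNReal.ofReal_mul ha.le, mul_inv_cancel₀ ha.ne', ENNReal.ofReal_one]

lemma div_trick {X Y : ℝ≥0∞} {a : ℝ} (ha : 0 < a) (h : X * ENNReal.ofReal a ≤ Y) :
    X ≤ ENNReal.ofReal a⁻¹ * Y := by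
  calc X = X * (ENNReal.ofReal a * ENNReal.ofReal a⁻¹) := by
        rw [ofReal_mul_inv_self ha, mul_one]
    _ = X * ENNReal.ofReal a * ENNReal.ofReal a⁻¹ := by ring
    _ ≤ Y * ENNReal.ofReal a⁻¹ := by gcongr
    _ = ENNReal.ofReal a⁻¹ * Y := mul_comm _ _

lemma Wn_eq {w : ℝ → ℝ} (hw : AEMeasurable w (volume.restrict (Ioi (0:ℝ))))
    (hwpos : ∀ r : ℝ, 0 < r → 0 < w r) {ψ : ℝ → ℂ} (hψ : Measurable ψ) :
    Wn w ψ = (∫⁻ t in Ioi (0:ℝ),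
      (ENNReal.ofReal (w t) * ‖ψ t‖₊) ^ (2:ℝ) * ENNReal.ofReal (2 * Real.pi * t)) ^ (1/2 : ℝ) := by
  rw [Wn, eLpNorm_eq_lintegral_rpow_nnnorm (by norm_num) (by norm_num)]
  have htr : (2 : ℝ≥0∞).toReal = (2:ℝ) := by simp
  rw [htr]
  congr 1
  rw [rmeas_lintegral (by
    apply AEMeasurable.pow_const
    exact ((Complex.measurable_ofReal.comp_aemeasurable hw).mul hψ.aemeasurable).enorm)]
  apply setLIntegral_congr_fun_ae measurableSet_Ioi
  filter_upwards with t ht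
  congr 2
  rw [nnnorm_mul, ENNReal.coe_mul]
  congr 1
  rw [Complex.nnnorm_real, Real.ennnorm_eq_ofReal (hwpos t ht).le]

lemma CS {w₁ w₂ : ℝ → ℝ} (hw₁ : AEMeasurable w₁ (volume.restrict (Ioi (0:ℝ))))
    (hw₂ : AEMeasurable w₂ (volume.restrict (Ioi (0:ℝ))))
    (hw₁pos : ∀ r : ℝ, 0 < r → 0 < w₁ r) (hw₂pos : ∀ r : ℝ, 0 < r → 0 < w₂ r)
    {ψ₁ ψ₂ : ℝ → ℂ} (hψ₁ : Measurable ψ₁) (hψ₂ : Measurable ψ₂) :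
    ∫⁻ t in Ioi (0:ℝ), (ENNReal.ofReal (w₁ t) * ‖ψ₁ t‖₊) * (ENNReal.ofReal (w₂ t) * ‖ψ₂ t‖₊)
        * ENNReal.ofReal (2 * Real.pi * t)
      ≤ Wn w₁ ψ₁ * Wn w₂ ψ₂ := by
  set μ := volume.restrict (Ioi (0:ℝ)) with hμ
  set F := fun t => (ENNReal.ofReal (w₁ t) * ‖ψ₁ t‖₊) * ENNReal.ofReal (2*Real.pi*t) ^ (1/2:ℝ)
    with hF
  set G := fun t => (ENNReal.ofReal (w₂ t) * ‖ψ₂ t‖₊) * ENNReal.ofReal (2*Real.pi*t) ^ (1/2:ℝ)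
    with hG
  have hmF : AEMeasurable F μ := by
    apply AEMeasurable.mul
    · exact hw₁.ennreal_ofReal.mul hψ₁.ennnorm.aemeasurable
    · exact ((ENNReal.continuous_rpow_const.measurable).comp
        (by fun_prop : Measurable fun t : ℝ => ENNReal.ofReal (2*Real.pi*t))).aemeasurable
  have hmG : AEMeasurable G μ := by
    apply AEMeasurable.mul
    · exact hw₂.ennreal_ofReal.mul hψ₂.ennnorm.aemeasurable
    · exact ((ENNReal.continuous_rpow_const.measurable).comp
        (by fun_prop : Measurable fun t : ℝ => ENNReal.ofReal (2*Real.pi*t))).aemeasurable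
  have hpq : (2:ℝ).HolderConjugate 2 := Real.HolderConjugate.two_two
  have key := ENNReal.lintegral_mul_le_Lp_mul_Lq μ hpq hmF hmG
  have hsq : ∀ x : ℝ≥0∞, x ^ (1/2:ℝ) * x ^ (1/2:ℝ) = x := by
    intro x
    rw [← ENNReal.rpow_add_of_nonneg _ _ (by norm_num) (by norm_num)]
    norm_num
  have hFG : (fun t => (ENNReal.ofReal (w₁ t) * ‖ψ₁ t‖₊) * (ENNReal.ofReal (w₂ t) * ‖ψ₂ t‖₊)
        * ENNReal.ofReal (2 * Real.pi * t)) = F * G := by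
    funext t
    simp only [hF, hG, Pi.mul_apply]
    rw [show (ENNReal.ofReal (w₁ t) * ‖ψ₁ t‖₊) * ENNReal.ofReal (2*Real.pi*t) ^ (1/2:ℝ) *
        ((ENNReal.ofReal (w₂ t) * ‖ψ₂ t‖₊) * ENNReal.ofReal (2*Real.pi*t) ^ (1/2:ℝ)) =
        (ENNReal.ofReal (w₁ t) * ‖ψ₁ t‖₊) * (ENNReal.ofReal (w₂ t) * ‖ψ₂ t‖₊) *
        (ENNReal.ofReal (2*Real.pi*t) ^ (1/2:ℝ) * ENNReal.ofReal (2*Real.pi*t) ^ (1/2:ℝ)) by ring,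
      hsq]
  have hFsq : ∀ t, F t ^ (2:ℝ)
      = (ENNReal.ofReal (w₁ t) * ‖ψ₁ t‖₊) ^ (2:ℝ) * ENNReal.ofReal (2 * Real.pi * t) := by
    intro t
    rw [hF, ENNReal.mul_rpow_of_nonneg _ _ (by norm_num : (0:ℝ) ≤ 2),
      ← ENNReal.rpow_mul]
    norm_num
  have hGsq : ∀ t, G t ^ (2:ℝ)
      = (ENNReal.ofReal (w₂ t) * ‖ψ₂ t‖₊) ^ (2:ℝ) * ENNReal.ofReal (2 * Real.pi * t) := by
    intro t
    rw [hG, ENNReal.mul_rpow_of_nonneg _ _ (by norm_num : (0:ℝ) ≤ 2),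
      ← ENNReal.rpow_mul]
    norm_num
  calc ∫⁻ t in Ioi (0:ℝ), (ENNReal.ofReal (w₁ t) * ‖ψ₁ t‖₊) * (ENNReal.ofReal (w₂ t) * ‖ψ₂ t‖₊)
        * ENNReal.ofReal (2 * Real.pi * t)
      = ∫⁻ t, (F * G) t ∂μ := by rw [← hμ]; exact lintegral_congr fun t => by rw [← hFG]
    _ ≤ (∫⁻ t, F t ^ (2:ℝ) ∂μ) ^ (1/2:ℝ) * (∫⁻ t, G t ^ (2:ℝ) ∂μ) ^ (1/2:ℝ) := key
    _ = Wn w₁ ψ₁ * Wn w₂ ψ₂ := by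
        rw [Wn_eq hw₁ hw₁pos hψ₁, Wn_eq hw₂ hw₂pos hψ₂]
        congr 1
        · congr 1; exact lintegral_congr fun t => hFsq t
        · congr 1; exact lintegral_congr fun t => hGsq t

lemma CS' {w₁ w₂ : ℝ → ℝ} (hw₁ : AEMeasurable w₁ (volume.restrict (Ioi (0:ℝ))))
    (hw₂ : AEMeasurable w₂ (volume.restrict (Ioi (0:ℝ))))
    (hw₁pos : ∀ r : ℝ, 0 < r → 0 < w₁ r) (hw₂pos : ∀ r : ℝ, 0 < r → 0 < w₂ r)
    {ψ₁ ψ₂ : ℝ → ℂ} (hψ₁ : Measurable ψ₁) (hψ₂ : Measurable ψ₂) :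
    ∫⁻ t in Ioi (0:ℝ), (ENNReal.ofReal (w₁ t) * ‖ψ₁ t‖₊) * (ENNReal.ofReal (w₂ t) * ‖ψ₂ t‖₊)
        * ENNReal.ofReal t
      ≤ ENNReal.ofReal (2 * Real.pi)⁻¹ * (Wn w₁ ψ₁ * Wn w₂ ψ₂) := by
  apply div_trick (by positivity)
  rw [← lintegral_mul_const' (ENNReal.ofReal (2 * Real.pi)) _ ENNReal.ofReal_ne_top]
  calc ∫⁻ t in Ioi (0:ℝ), (ENNReal.ofReal (w₁ t) * ‖ψ₁ t‖₊) * (ENNReal.ofReal (w₂ t) * ‖ψ₂ t‖₊)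
        * ENNReal.ofReal t * ENNReal.ofReal (2 * Real.pi)
      = ∫⁻ t in Ioi (0:ℝ), (ENNReal.ofReal (w₁ t) * ‖ψ₁ t‖₊) * (ENNReal.ofReal (w₂ t) * ‖ψ₂ t‖₊)
        * ENNReal.ofReal (2 * Real.pi * t) := by
        apply lintegral_congr fun t => ?_
        rw [show ENNReal.ofReal (2*Real.pi*t) = ENNReal.ofReal (2*Real.pi) * ENNReal.ofReal t
          from ENNReal.ofReal_mul (by positivity)]
        ring
    _ ≤ Wn w₁ ψ₁ * Wn w₂ ψ₂ := CS hw₁ hw₂ hw₁pos hw₂pos hψ₁ hψ₂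
lemma Re2_abs_le (ψ₁ ψ₂ : ℝ → ℂ) (t : ℝ) : |Re2 ψ₁ ψ₂ t| ≤ ‖ψ₁ t‖ * ‖ψ₂ t‖ := by
  calc |Re2 ψ₁ ψ₂ t| ≤ ‖(starRingEnd ℂ) (ψ₁ t) * ψ₂ t‖ := Complex.abs_re_le_norm _
    _ = ‖ψ₁ t‖ * ‖ψ₂ t‖ := by
        rw [norm_mul, Complex.norm_conj]

/-- pointwise bound on the integrand of `Atheta2` -/
lemma Re2_bound (ψ₁ ψ₂ : ℝ → ℂ) {t : ℝ} (ht : 0 ≤ t) :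
    (‖Re2 ψ₁ ψ₂ t * t‖₊ : ℝ≥0∞) ≤ ‖ψ₁ t‖₊ * ‖ψ₂ t‖₊ * ENNReal.ofReal t := by
  have h : ‖Re2 ψ₁ ψ₂ t * t‖ ≤ ‖ψ₁ t‖ * ‖ψ₂ t‖ * t := by
    rw [norm_mul, Real.norm_eq_abs, Real.norm_eq_abs, abs_of_nonneg ht]
    apply mul_le_mul_of_nonneg_right _ ht
    calc |Re2 ψ₁ ψ₂ t| ≤ ‖(starRingEnd ℂ) (ψ₁ t) * ψ₂ t‖ := Complex.abs_re_le_norm _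
      _ = ‖ψ₁ t‖ * ‖ψ₂ t‖ := by
          rw [norm_mul, Complex.norm_conj]
  calc (‖Re2 ψ₁ ψ₂ t * t‖₊ : ℝ≥0∞) = ENNReal.ofReal ‖Re2 ψ₁ ψ₂ t * t‖ :=
        (ofReal_norm_eq_coe_nnnorm _).symm
    _ ≤ ENNReal.ofReal (‖ψ₁ t‖ * ‖ψ₂ t‖ * t) := ENNReal.ofReal_le_ofReal h
    _ = _ := by
        rw [ENNReal.ofReal_mul (by positivity), ENNReal.ofReal_mul (norm_nonneg _),
          ofReal_norm_eq_coe_nnnorm, ofReal_norm_eq_coe_nnnorm]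

lemma Abound {w₁ w₂ : ℝ → ℝ} (hw₁ : AEMeasurable w₁ (volume.restrict (Ioi (0:ℝ))))
    (hw₂ : AEMeasurable w₂ (volume.restrict (Ioi (0:ℝ))))
    (hw₁pos : ∀ r : ℝ, 0 < r → 0 < w₁ r) (hw₂pos : ∀ r : ℝ, 0 < r → 0 < w₂ r)
    (hw₁anti : ∀ r s : ℝ, 0 < r → r ≤ s → w₁ s ≤ w₁ r)
    (hw₂anti : ∀ r s : ℝ, 0 < r → r ≤ s → w₂ s ≤ w₂ r)
    {ψ₁ ψ₂ : ℝ → ℂ} (hψ₁ : Measurable ψ₁) (hψ₂ : Measurable ψ₂)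
    {r : ℝ} (hr : 0 < r) :
    ENNReal.ofReal (w₁ r) * ENNReal.ofReal (w₂ r) * ‖Atheta2 ψ₁ ψ₂ r‖₊
      ≤ ENNReal.ofReal (4 * Real.pi)⁻¹ * (Wn w₁ ψ₁ * Wn w₂ ψ₂) := by
  have h1 : (‖Atheta2 ψ₁ ψ₂ r‖₊ : ℝ≥0∞)
      ≤ ENNReal.ofReal 2⁻¹ * ∫⁻ t in Ioc (0:ℝ) r, ‖ψ₁ t‖₊ * ‖ψ₂ t‖₊ * ENNReal.ofReal t := by
    have e : Atheta2 ψ₁ ψ₂ r = -(1/2) * ∫ t in Ioc (0:ℝ) r, Re2 ψ₁ ψ₂ t * t := by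
      rw [Atheta2, intervalIntegral.integral_of_le hr.le]
    rw [e]
    calc (‖-(1/2) * ∫ t in Ioc (0:ℝ) r, Re2 ψ₁ ψ₂ t * t‖₊ : ℝ≥0∞)
        = ENNReal.ofReal 2⁻¹ * ‖∫ t in Ioc (0:ℝ) r, Re2 ψ₁ ψ₂ t * t‖₊ := by
          rw [nnnorm_mul, ENNReal.coe_mul]
          congr 1
          rw [nnnorm_neg, Real.ennnorm_eq_ofReal (by norm_num)]
          norm_num
      _ ≤ ENNReal.ofReal 2⁻¹ * ∫⁻ t in Ioc (0:ℝ) r, ‖Re2 ψ₁ ψ₂ t * t‖₊ :=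
          mul_le_mul_right (ennnorm_integral_le_lintegral_ennnorm _) _
      _ ≤ ENNReal.ofReal 2⁻¹ * ∫⁻ t in Ioc (0:ℝ) r, ‖ψ₁ t‖₊ * ‖ψ₂ t‖₊ * ENNReal.ofReal t :=
          mul_le_mul_right (setLIntegral_mono' measurableSet_Ioc
            fun t ht => Re2_bound ψ₁ ψ₂ ht.1.le) _
  calc ENNReal.ofReal (w₁ r) * ENNReal.ofReal (w₂ r) * ‖Atheta2 ψ₁ ψ₂ r‖₊
      ≤ ENNReal.ofReal (w₁ r) * ENNReal.ofReal (w₂ r) *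
        (ENNReal.ofReal 2⁻¹ * ∫⁻ t in Ioc (0:ℝ) r, ‖ψ₁ t‖₊ * ‖ψ₂ t‖₊ * ENNReal.ofReal t) := by
        gcongr
    _ = ENNReal.ofReal 2⁻¹ * ∫⁻ t in Ioc (0:ℝ) r,
          ENNReal.ofReal (w₁ r) * ENNReal.ofReal (w₂ r) *
            (‖ψ₁ t‖₊ * ‖ψ₂ t‖₊ * ENNReal.ofReal t) := by
        rw [lintegral_const_mul' (ENNReal.ofReal (w₁ r) * ENNReal.ofReal (w₂ r)) _
          (by finiteness)]
        ring
    _ ≤ ENNReal.ofReal 2⁻¹ * ∫⁻ t in Ioc (0:ℝ) r,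
          (ENNReal.ofReal (w₁ t) * ‖ψ₁ t‖₊) * (ENNReal.ofReal (w₂ t) * ‖ψ₂ t‖₊)
            * ENNReal.ofReal t := by
        apply mul_le_mul_right
        apply setLIntegral_mono' measurableSet_Ioc
        intro t ht
        calc ENNReal.ofReal (w₁ r) * ENNReal.ofReal (w₂ r) * (‖ψ₁ t‖₊ * ‖ψ₂ t‖₊ * ENNReal.ofReal t)
            ≤ ENNReal.ofReal (w₁ t) * ENNReal.ofReal (w₂ t)
              * (‖ψ₁ t‖₊ * ‖ψ₂ t‖₊ * ENNReal.ofReal t) := by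
              gcongr
              · exact hw₁anti t r ht.1 ht.2
              · exact hw₂anti t r ht.1 ht.2
          _ = (ENNReal.ofReal (w₁ t) * ‖ψ₁ t‖₊) * (ENNReal.ofReal (w₂ t) * ‖ψ₂ t‖₊)
              * ENNReal.ofReal t := by ring
    _ ≤ ENNReal.ofReal 2⁻¹ * ∫⁻ t in Ioi (0:ℝ),
          (ENNReal.ofReal (w₁ t) * ‖ψ₁ t‖₊) * (ENNReal.ofReal (w₂ t) * ‖ψ₂ t‖₊)
            * ENNReal.ofReal t :=
        mul_le_mul_right (lintegral_mono' (Measure.restrict_mono Ioc_subset_Ioi_self le_rfl)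
          le_rfl) _
    _ ≤ ENNReal.ofReal 2⁻¹ * (ENNReal.ofReal (2 * Real.pi)⁻¹ * (Wn w₁ ψ₁ * Wn w₂ ψ₂)) :=
        mul_le_mul_right (CS' hw₁ hw₂ hw₁pos hw₂pos hψ₁ hψ₂) _
    _ = ENNReal.ofReal (4 * Real.pi)⁻¹ * (Wn w₁ ψ₁ * Wn w₂ ψ₂) := by
        rw [← mul_assoc, ← ENNReal.ofReal_mul (by norm_num)]
        congr 2
        rw [← mul_inv]
        norm_num
        ring
section Pointwise

variable {w₁ w₂ w₃ w₄ w₅ : ℝ → ℝ}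
  (hw₁ : AEMeasurable w₁ (volume.restrict (Ioi (0:ℝ))))
  (hw₂ : AEMeasurable w₂ (volume.restrict (Ioi (0:ℝ))))
  (hw₃ : AEMeasurable w₃ (volume.restrict (Ioi (0:ℝ))))
  (hw₄ : AEMeasurable w₄ (volume.restrict (Ioi (0:ℝ))))
  (hw₁pos : ∀ r : ℝ, 0 < r → 0 < w₁ r) (hw₂pos : ∀ r : ℝ, 0 < r → 0 < w₂ r)
  (hw₃pos : ∀ r : ℝ, 0 < r → 0 < w₃ r) (hw₄pos : ∀ r : ℝ, 0 < r → 0 < w₄ r)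
  (hw₅pos : ∀ r : ℝ, 0 < r → 0 < w₅ r)
  (hw₁anti : ∀ r s : ℝ, 0 < r → r ≤ s → w₁ s ≤ w₁ r)
  (hw₂anti : ∀ r s : ℝ, 0 < r → r ≤ s → w₂ s ≤ w₂ r)
  (hw₃anti : ∀ r s : ℝ, 0 < r → r ≤ s → w₃ s ≤ w₃ r)
  (hw₄anti : ∀ r s : ℝ, 0 < r → r ≤ s → w₄ s ≤ w₄ r)
  (hw₅anti : ∀ r s : ℝ, 0 < r → r ≤ s → w₅ s ≤ w₅ r)
  (hprod : ∀ r : ℝ, 0 < r → w₁ r * w₂ r * w₃ r * w₄ r * w₅ r = (r ^ 2)⁻¹)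
  {ψ₁ ψ₂ ψ₃ ψ₄ ψ₅ : ℝ → ℂ}
  (hψ₁ : Measurable ψ₁) (hψ₂ : Measurable ψ₂) (hψ₃ : Measurable ψ₃)
  (hψ₄ : Measurable ψ₄) (hψ₅ : Measurable ψ₅)

include hw₁ hw₂ hw₃ hw₄ hw₁pos hw₂pos hw₃pos hw₄pos hw₅pos hw₁anti hw₂anti hw₃anti hw₄anti
  hprod hψ₁ hψ₂ hψ₃ hψ₄ in
lemma pt1 {r : ℝ} (hr : 0 < r) :
    (‖N5 1 ψ₁ ψ₂ ψ₃ ψ₄ ψ₅ r‖₊ : ℝ≥0∞)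
      ≤ (ENNReal.ofReal (4 * Real.pi)⁻¹ * (Wn w₁ ψ₁ * Wn w₂ ψ₂))
        * (ENNReal.ofReal (4 * Real.pi)⁻¹ * (Wn w₃ ψ₃ * Wn w₄ ψ₄))
        * (ENNReal.ofReal (w₅ r) * ‖ψ₅ r‖₊) := by
  have h2 : |Atheta2 ψ₁ ψ₂ r * Atheta2 ψ₃ ψ₄ r / r ^ 2|
      = w₁ r * w₂ r * |Atheta2 ψ₁ ψ₂ r| * (w₃ r * w₄ r * |Atheta2 ψ₃ ψ₄ r|) * w₅ r := by
    rw [abs_div, abs_mul, abs_of_pos (pow_pos hr 2), div_eq_mul_inv, ← hprod r hr]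
    ring
  have hnn1 : (0:ℝ) ≤ w₁ r * w₂ r * |Atheta2 ψ₁ ψ₂ r| := by
    have := (hw₁pos r hr).le; have := (hw₂pos r hr).le; positivity
  have hnn2 : (0:ℝ) ≤ w₃ r * w₄ r * |Atheta2 ψ₃ ψ₄ r| := by
    have := (hw₃pos r hr).le; have := (hw₄pos r hr).le; positivity
  calc (‖N5 1 ψ₁ ψ₂ ψ₃ ψ₄ ψ₅ r‖₊ : ℝ≥0∞)
      = ENNReal.ofReal |Atheta2 ψ₁ ψ₂ r * Atheta2 ψ₃ ψ₄ r / r ^ 2| * ‖ψ₅ r‖₊ := by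
        show (‖((Atheta2 ψ₁ ψ₂ r * Atheta2 ψ₃ ψ₄ r / r ^ 2 : ℝ) : ℂ) * ψ₅ r‖₊ : ℝ≥0∞) = _
        rw [nnnorm_mul, ENNReal.coe_mul, Complex.nnnorm_real, Real.ennnorm_eq_ofReal_abs]
    _ = (ENNReal.ofReal (w₁ r) * ENNReal.ofReal (w₂ r) * ‖Atheta2 ψ₁ ψ₂ r‖₊)
        * (ENNReal.ofReal (w₃ r) * ENNReal.ofReal (w₄ r) * ‖Atheta2 ψ₃ ψ₄ r‖₊)
        * (ENNReal.ofReal (w₅ r) * ‖ψ₅ r‖₊) := by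
        rw [h2, ENNReal.ofReal_mul (mul_nonneg hnn1 hnn2), ENNReal.ofReal_mul hnn1,
          ENNReal.ofReal_mul (mul_nonneg (hw₁pos r hr).le (hw₂pos r hr).le),
          ENNReal.ofReal_mul (hw₁pos r hr).le,
          ENNReal.ofReal_mul (mul_nonneg (hw₃pos r hr).le (hw₄pos r hr).le),
          ENNReal.ofReal_mul (hw₃pos r hr).le,
          Real.ennnorm_eq_ofReal_abs, Real.ennnorm_eq_ofReal_abs]
        ring
    _ ≤ (ENNReal.ofReal (4 * Real.pi)⁻¹ * (Wn w₁ ψ₁ * Wn w₂ ψ₂))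
        * (ENNReal.ofReal (4 * Real.pi)⁻¹ * (Wn w₃ ψ₃ * Wn w₄ ψ₄))
        * (ENNReal.ofReal (w₅ r) * ‖ψ₅ r‖₊) := by
        refine mul_le_mul' (mul_le_mul' ?_ ?_) le_rfl
        · exact Abound hw₁ hw₂ hw₁pos hw₂pos hw₁anti hw₂anti hψ₁ hψ₂ hr
        · exact Abound hw₃ hw₄ hw₃pos hw₄pos hw₃anti hw₄anti hψ₃ hψ₄ hr

include hw₁ hw₂ hw₃ hw₄ hw₁pos hw₂pos hw₃pos hw₄pos hw₅pos hw₁anti hw₂anti hw₅anti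
  hprod hψ₁ hψ₂ hψ₃ hψ₄ in
lemma pt2 {r : ℝ} (hr : 0 < r) :
    (‖N5 2 ψ₁ ψ₂ ψ₃ ψ₄ ψ₅ r‖₊ : ℝ≥0∞)
      ≤ (ENNReal.ofReal (4 * Real.pi)⁻¹ * (Wn w₁ ψ₁ * Wn w₂ ψ₂))
        * (ENNReal.ofReal (2 * Real.pi)⁻¹ * (Wn w₃ ψ₃ * Wn w₄ ψ₄))
        * (ENNReal.ofReal (w₅ r) * ‖ψ₅ r‖₊) := by
  set c := ENNReal.ofReal (4 * Real.pi)⁻¹ * (Wn w₁ ψ₁ * Wn w₂ ψ₂) with hc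
  -- pointwise bound on the integrand
  have hpt : ∀ t : ℝ, t ∈ Ioi r →
      (‖Atheta2 ψ₁ ψ₂ t * Re2 ψ₃ ψ₄ t / t‖₊ : ℝ≥0∞)
        ≤ (c * ENNReal.ofReal (w₅ r)) *
          ((ENNReal.ofReal (w₃ t) * ‖ψ₃ t‖₊) * (ENNReal.ofReal (w₄ t) * ‖ψ₄ t‖₊)
            * ENNReal.ofReal t) := by
    intro t ht
    have ht0 : 0 < t := hr.trans ht
    have e1 : (ENNReal.ofReal (w₁ t) * ENNReal.ofReal (w₂ t)) *
        (ENNReal.ofReal (w₃ t) * ENNReal.ofReal (w₄ t) * ENNReal.ofReal (w₅ t)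
          * ENNReal.ofReal t) * ENNReal.ofReal t = 1 := by
      rw [← ENNReal.ofReal_mul (hw₁pos t ht0).le, ← ENNReal.ofReal_mul (hw₃pos t ht0).le,
        ← ENNReal.ofReal_mul (mul_nonneg (hw₃pos t ht0).le (hw₄pos t ht0).le),
        ← ENNReal.ofReal_mul (mul_nonneg (mul_nonneg (hw₃pos t ht0).le (hw₄pos t ht0).le)
            (hw₅pos t ht0).le),
        ← ENNReal.ofReal_mul (mul_nonneg (hw₁pos t ht0).le (hw₂pos t ht0).le),
        ← ENNReal.ofReal_mul (mul_nonneg (mul_nonneg (hw₁pos t ht0).le (hw₂pos t ht0).le)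
            (mul_nonneg (mul_nonneg (mul_nonneg (hw₃pos t ht0).le (hw₄pos t ht0).le)
              (hw₅pos t ht0).le) ht0.le))]
      · rw [show w₁ t * w₂ t * (w₃ t * w₄ t * w₅ t * t) * t
            = w₁ t * w₂ t * w₃ t * w₄ t * w₅ t * t ^ 2 by ring, hprod t ht0,
          inv_mul_cancel₀ (by positivity), ENNReal.ofReal_one]
    have hA := Abound hw₁ hw₂ hw₁pos hw₂pos hw₁anti hw₂anti hψ₁ hψ₂ ht0
    have key_t : ENNReal.ofReal |Atheta2 ψ₁ ψ₂ t| * ENNReal.ofReal t⁻¹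
        ≤ c * (ENNReal.ofReal (w₃ t) * ENNReal.ofReal (w₄ t) * ENNReal.ofReal (w₅ t)
            * ENNReal.ofReal t) := by
      calc ENNReal.ofReal |Atheta2 ψ₁ ψ₂ t| * ENNReal.ofReal t⁻¹
          = ((ENNReal.ofReal (w₁ t) * ENNReal.ofReal (w₂ t)) *
              (ENNReal.ofReal (w₃ t) * ENNReal.ofReal (w₄ t) * ENNReal.ofReal (w₅ t)
                * ENNReal.ofReal t) * ENNReal.ofReal t)
            * (ENNReal.ofReal |Atheta2 ψ₁ ψ₂ t| * ENNReal.ofReal t⁻¹) := by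
            rw [e1, one_mul]
        _ = (ENNReal.ofReal (w₁ t) * ENNReal.ofReal (w₂ t) * ENNReal.ofReal |Atheta2 ψ₁ ψ₂ t|)
            * (ENNReal.ofReal (w₃ t) * ENNReal.ofReal (w₄ t) * ENNReal.ofReal (w₅ t)
              * ENNReal.ofReal t) * (ENNReal.ofReal t * ENNReal.ofReal t⁻¹) := by ring
        _ = (ENNReal.ofReal (w₁ t) * ENNReal.ofReal (w₂ t) * ENNReal.ofReal |Atheta2 ψ₁ ψ₂ t|)
            * (ENNReal.ofReal (w₃ t) * ENNReal.ofReal (w₄ t) * ENNReal.ofReal (w₅ t)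
              * ENNReal.ofReal t) := by rw [ofReal_mul_inv_self ht0, mul_one]
        _ ≤ c * (ENNReal.ofReal (w₃ t) * ENNReal.ofReal (w₄ t) * ENNReal.ofReal (w₅ t)
              * ENNReal.ofReal t) := by
            apply mul_le_mul_left
            rw [← Real.ennnorm_eq_ofReal_abs]
            exact hA
    calc (‖Atheta2 ψ₁ ψ₂ t * Re2 ψ₃ ψ₄ t / t‖₊ : ℝ≥0∞)
        = ENNReal.ofReal |Atheta2 ψ₁ ψ₂ t| * ENNReal.ofReal t⁻¹
          * ENNReal.ofReal |Re2 ψ₃ ψ₄ t| := by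
          rw [Real.ennnorm_eq_ofReal_abs, abs_div, abs_mul, abs_of_pos ht0, div_eq_mul_inv,
            ENNReal.ofReal_mul (by positivity), ENNReal.ofReal_mul (abs_nonneg _)]
          ring
      _ ≤ (c * (ENNReal.ofReal (w₃ t) * ENNReal.ofReal (w₄ t) * ENNReal.ofReal (w₅ t)
            * ENNReal.ofReal t)) * ENNReal.ofReal (‖ψ₃ t‖ * ‖ψ₄ t‖) := by
          exact mul_le_mul' key_t (ENNReal.ofReal_le_ofReal (Re2_abs_le ψ₃ ψ₄ t))
      _ ≤ (c * (ENNReal.ofReal (w₃ t) * ENNReal.ofReal (w₄ t) * ENNReal.ofReal (w₅ r)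
            * ENNReal.ofReal t)) * ENNReal.ofReal (‖ψ₃ t‖ * ‖ψ₄ t‖) := by
          gcongr
          exact hw₅anti r t hr (le_of_lt ht)
      _ = (c * ENNReal.ofReal (w₅ r)) *
          ((ENNReal.ofReal (w₃ t) * ‖ψ₃ t‖₊) * (ENNReal.ofReal (w₄ t) * ‖ψ₄ t‖₊)
            * ENNReal.ofReal t) := by
          rw [ENNReal.ofReal_mul (norm_nonneg _), ofReal_norm_eq_coe_nnnorm,
            ofReal_norm_eq_coe_nnnorm]
          ring
  have hg : AEMeasurable (fun t => (ENNReal.ofReal (w₃ t) * ‖ψ₃ t‖₊)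
      * (ENNReal.ofReal (w₄ t) * ‖ψ₄ t‖₊) * ENNReal.ofReal t)
      (volume.restrict (Ioi r)) := by
    have hle : volume.restrict (Ioi r) ≤ volume.restrict (Ioi (0:ℝ)) :=
      Measure.restrict_mono (Ioi_subset_Ioi hr.le) le_rfl
    exact (((hw₃.mono_measure hle).ennreal_ofReal.mul hψ₃.ennnorm.aemeasurable.restrict).mul
      ((hw₄.mono_measure hle).ennreal_ofReal.mul hψ₄.ennnorm.aemeasurable.restrict)).mul
      (aemeasurable_id.restrict.ennreal_ofReal)
  calc (‖N5 2 ψ₁ ψ₂ ψ₃ ψ₄ ψ₅ r‖₊ : ℝ≥0∞)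
      = ENNReal.ofReal |∫ t in Set.Ioi r, Atheta2 ψ₁ ψ₂ t * Re2 ψ₃ ψ₄ t / t| * ‖ψ₅ r‖₊ := by
        show (‖-(((∫ t in Set.Ioi r, Atheta2 ψ₁ ψ₂ t * Re2 ψ₃ ψ₄ t / t : ℝ)) : ℂ) * ψ₅ r‖₊
          : ℝ≥0∞) = _
        rw [nnnorm_mul, ENNReal.coe_mul, nnnorm_neg, Complex.nnnorm_real,
          Real.ennnorm_eq_ofReal_abs]
    _ ≤ (∫⁻ t in Ioi r, ‖Atheta2 ψ₁ ψ₂ t * Re2 ψ₃ ψ₄ t / t‖₊) * ‖ψ₅ r‖₊ := by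
        apply mul_le_mul_left
        rw [← Real.ennnorm_eq_ofReal_abs]
        exact ennnorm_integral_le_lintegral_ennnorm _
    _ ≤ ((c * ENNReal.ofReal (w₅ r)) * ∫⁻ t in Ioi r,
          (ENNReal.ofReal (w₃ t) * ‖ψ₃ t‖₊) * (ENNReal.ofReal (w₄ t) * ‖ψ₄ t‖₊)
            * ENNReal.ofReal t) * ‖ψ₅ r‖₊ := by
        apply mul_le_mul_left
        rw [← lintegral_const_mul'' _ hg]
        exact setLIntegral_mono' measurableSet_Ioi hpt
    _ ≤ ((c * ENNReal.ofReal (w₅ r)) * (ENNReal.ofReal (2 * Real.pi)⁻¹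
          * (Wn w₃ ψ₃ * Wn w₄ ψ₄))) * ‖ψ₅ r‖₊ := by
        apply mul_le_mul_left
        apply mul_le_mul_right
        calc ∫⁻ t in Ioi r, (ENNReal.ofReal (w₃ t) * ‖ψ₃ t‖₊)
              * (ENNReal.ofReal (w₄ t) * ‖ψ₄ t‖₊) * ENNReal.ofReal t
            ≤ ∫⁻ t in Ioi (0:ℝ), (ENNReal.ofReal (w₃ t) * ‖ψ₃ t‖₊)
              * (ENNReal.ofReal (w₄ t) * ‖ψ₄ t‖₊) * ENNReal.ofReal t :=
              lintegral_mono' (Measure.restrict_mono (Ioi_subset_Ioi hr.le) le_rfl) le_rfl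
          _ ≤ ENNReal.ofReal (2 * Real.pi)⁻¹ * (Wn w₃ ψ₃ * Wn w₄ ψ₄) :=
              CS' hw₃ hw₄ hw₃pos hw₄pos hψ₃ hψ₄
    _ = c * (ENNReal.ofReal (2 * Real.pi)⁻¹ * (Wn w₃ ψ₃ * Wn w₄ ψ₄))
          * (ENNReal.ofReal (w₅ r) * ‖ψ₅ r‖₊) := by ring

end Pointwise
end QuinticAux

namespace QuinticAux
lemma psi_ae_zero {w : ℝ → ℝ} (hw : AEMeasurable w (volume.restrict (Ioi (0:ℝ))))
    (hwpos : ∀ r : ℝ, 0 < r → 0 < w r) {ψ : ℝ → ℂ} (hψ : Measurable ψ)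
    (h : Wn w ψ = 0) : ψ =ᵐ[volume.restrict (Ioi (0:ℝ))] 0 := by
  have hm : AEStronglyMeasurable (fun r => ((w r : ℝ) : ℂ) * ψ r) rmeas := by
    have : AEMeasurable (fun r => ((w r : ℝ) : ℂ) * ψ r) (volume.restrict (Ioi (0:ℝ))) :=
      (Complex.measurable_ofReal.comp_aemeasurable hw).mul hψ.aemeasurable
    exact (this.mono_ac (withDensity_absolutelyContinuous _ _)).aestronglyMeasurable
  have h0 := (eLpNorm_eq_zero_iff hm (by norm_num)).mp h
  have h0' : ∀ᵐ x ∂rmeas, ((w x : ℝ) : ℂ) * ψ x = 0 := h0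
  rw [rmeas, ae_withDensity_iff meas_density] at h0'
  filter_upwards [h0', ae_restrict_mem measurableSet_Ioi] with t ht htpos
  have h1 : ((w t : ℝ) : ℂ) * ψ t = 0 := by
    apply ht
    simp only [ne_eq, ENNReal.ofReal_eq_zero, not_le]
    have h3 : (0:ℝ) < Real.pi := Real.pi_pos
    have h4 : (0:ℝ) < t := htpos
    positivity
  rcases mul_eq_zero.mp h1 with h2 | h2
  · exact absurd (Complex.ofReal_eq_zero.mp h2) (hwpos t htpos).ne'
  · exact h2

lemma Atheta2_eq_zero {ψ₁ ψ₂ : ℝ → ℂ}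
    (h : (fun t => Re2 ψ₁ ψ₂ t) =ᵐ[volume.restrict (Ioi (0:ℝ))] 0)
    {r : ℝ} (hr : 0 < r) : Atheta2 ψ₁ ψ₂ r = 0 := by
  rw [Atheta2, intervalIntegral.integral_of_le hr.le]
  have h' : (fun t => Re2 ψ₁ ψ₂ t * t) =ᵐ[volume.restrict (Ioc (0:ℝ) r)] 0 := by
    have := ae_restrict_of_ae_restrict_of_subset (Ioc_subset_Ioi_self : Ioc (0:ℝ) r ⊆ Ioi 0) h
    filter_upwards [this] with t ht
    simp only [Pi.zero_apply] at ht ⊢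
    rw [ht, zero_mul]
  rw [integral_congr_ae h']
  simp

lemma N5_zero₁₂ {ψ₁ ψ₂ ψ₃ ψ₄ ψ₅ : ℝ → ℂ} (k : ℕ) (hk : k = 1 ∨ k = 2)
    (hre : (fun t => Re2 ψ₁ ψ₂ t) =ᵐ[volume.restrict (Ioi (0:ℝ))] 0) :
    N5 k ψ₁ ψ₂ ψ₃ ψ₄ ψ₅ =ᵐ[volume.restrict (Ioi (0:ℝ))] 0 := by
  rcases hk with rfl | rfl
  · filter_upwards [ae_restrict_mem measurableSet_Ioi] with r hr
    have hz : Atheta2 ψ₁ ψ₂ r = 0 := Atheta2_eq_zero hre hr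
    simp [N5, hz]
  · filter_upwards [ae_restrict_mem measurableSet_Ioi] with r hr
    have hz : ∫ t in Set.Ioi r, Atheta2 ψ₁ ψ₂ t * Re2 ψ₃ ψ₄ t / t = 0 := by
      rw [setIntegral_congr_fun measurableSet_Ioi
        (fun t ht => by
          show Atheta2 ψ₁ ψ₂ t * Re2 ψ₃ ψ₄ t / t = 0
          rw [Atheta2_eq_zero hre (lt_trans hr ht), zero_mul, zero_div]
          : EqOn (fun t => Atheta2 ψ₁ ψ₂ t * Re2 ψ₃ ψ₄ t / t) (fun _ => (0:ℝ)) (Ioi r))]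
      simp
    simp [N5, hz]

lemma N5_zero₃₄ {ψ₁ ψ₂ ψ₃ ψ₄ ψ₅ : ℝ → ℂ} (k : ℕ) (hk : k = 1 ∨ k = 2)
    (hre : (fun t => Re2 ψ₃ ψ₄ t) =ᵐ[volume.restrict (Ioi (0:ℝ))] 0) :
    N5 k ψ₁ ψ₂ ψ₃ ψ₄ ψ₅ =ᵐ[volume.restrict (Ioi (0:ℝ))] 0 := by
  rcases hk with rfl | rfl
  · filter_upwards [ae_restrict_mem measurableSet_Ioi] with r hr
    have hz : Atheta2 ψ₃ ψ₄ r = 0 := Atheta2_eq_zero hre hr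
    simp [N5, hz]
  · filter_upwards [ae_restrict_mem measurableSet_Ioi] with r hr
    have h' : (fun t => Atheta2 ψ₁ ψ₂ t * Re2 ψ₃ ψ₄ t / t)
        =ᵐ[volume.restrict (Ioi r)] 0 := by
      have := ae_restrict_of_ae_restrict_of_subset (Ioi_subset_Ioi hr.le) hre
      filter_upwards [this] with t ht
      simp only [Pi.zero_apply] at ht ⊢
      rw [ht, mul_zero, zero_div]
    have hz : ∫ t in Set.Ioi r, Atheta2 ψ₁ ψ₂ t * Re2 ψ₃ ψ₄ t / t = 0 := by
      rw [integral_congr_ae h']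
      simp
    simp [N5, hz]

lemma N5_zero₅ {ψ₁ ψ₂ ψ₃ ψ₄ ψ₅ : ℝ → ℂ} (k : ℕ) (hk : k = 1 ∨ k = 2)
    (h : ψ₅ =ᵐ[volume.restrict (Ioi (0:ℝ))] 0) :
    N5 k ψ₁ ψ₂ ψ₃ ψ₄ ψ₅ =ᵐ[volume.restrict (Ioi (0:ℝ))] 0 := by
  rcases hk with rfl | rfl <;>
  · filter_upwards [h] with r hr
    simp only [Pi.zero_apply] at hr ⊢
    simp [N5, hr]

lemma lhs_zero {ψ₁ ψ₂ ψ₃ ψ₄ ψ₅ : ℝ → ℂ} {k : ℕ}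
    (hae : N5 k ψ₁ ψ₂ ψ₃ ψ₄ ψ₅ =ᵐ[volume.restrict (Ioi (0:ℝ))] 0) :
    eLpNorm (N5 k ψ₁ ψ₂ ψ₃ ψ₄ ψ₅) 2 rmeas = 0 := by
  have h2 : N5 k ψ₁ ψ₂ ψ₃ ψ₄ ψ₅ =ᵐ[rmeas] 0 :=
    hae.filter_mono (Measure.AbsolutelyContinuous.ae_le
      (withDensity_absolutelyContinuous _ _))
  rw [eLpNorm_congr_ae h2, eLpNorm_zero]

lemma prod_top {W₁ W₂ W₃ W₄ W₅ : ℝ≥0∞} (h1 : W₁ ≠ 0) (h2 : W₂ ≠ 0) (h3 : W₃ ≠ 0)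
    (h4 : W₄ ≠ 0) (h5 : W₅ ≠ 0)
    (h : W₁ = ⊤ ∨ W₂ = ⊤ ∨ W₃ = ⊤ ∨ W₄ = ⊤) :
    ENNReal.ofReal 1 * W₁ * W₂ * W₃ * W₄ * W₅ = ⊤ := by
  have h0 : ENNReal.ofReal 1 ≠ 0 := by simp
  rcases h with h | h | h | h <;> subst h <;>
    simp [ENNReal.mul_eq_top, h1, h2, h3, h4, h5, h0]
end QuinticAux

open QuinticAux in
/-- Nonlinear estimates (weighted `L²`-type) for `N_{5,k}`, `k ∈ {1,2}`. -/
theorem nonlinear_estimates_weightedL2_quintic :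
    ∃ C : ℝ, 0 < C ∧
      ∀ (k : ℕ), (k = 1 ∨ k = 2) →
      ∀ w₁ w₂ w₃ w₄ w₅ : ℝ → ℝ,
        (∀ r : ℝ, 0 < r → 0 < w₁ r) → (∀ r : ℝ, 0 < r → 0 < w₂ r) →
        (∀ r : ℝ, 0 < r → 0 < w₃ r) → (∀ r : ℝ, 0 < r → 0 < w₄ r) →
        (∀ r : ℝ, 0 < r → 0 < w₅ r) →
        (∀ r s : ℝ, 0 < r → r ≤ s → w₁ s ≤ w₁ r) →
        (∀ r s : ℝ, 0 < r → r ≤ s → w₂ s ≤ w₂ r) →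
        (∀ r s : ℝ, 0 < r → r ≤ s → w₃ s ≤ w₃ r) →
        (∀ r s : ℝ, 0 < r → r ≤ s → w₄ s ≤ w₄ r) →
        (∀ r s : ℝ, 0 < r → r ≤ s → w₅ s ≤ w₅ r) →
        (∀ r : ℝ, 0 < r → w₁ r * w₂ r * w₃ r * w₄ r * w₅ r = (r ^ 2)⁻¹) →
        ∀ ψ₁ ψ₂ ψ₃ ψ₄ ψ₅ : ℝ → ℂ,
          Measurable ψ₁ → Measurable ψ₂ → Measurable ψ₃ → Measurable ψ₄ →
          Measurable ψ₅ →
          eLpNorm (N5 k ψ₁ ψ₂ ψ₃ ψ₄ ψ₅) 2 rmeas ≤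
            ENNReal.ofReal C
              * eLpNorm (fun r => ((w₁ r : ℝ) : ℂ) * ψ₁ r) 2 rmeas
              * eLpNorm (fun r => ((w₂ r : ℝ) : ℂ) * ψ₂ r) 2 rmeas
              * eLpNorm (fun r => ((w₃ r : ℝ) : ℂ) * ψ₃ r) 2 rmeas
              * eLpNorm (fun r => ((w₄ r : ℝ) : ℂ) * ψ₄ r) 2 rmeas
              * eLpNorm (fun r => ((w₅ r : ℝ) : ℂ) * ψ₅ r) 2 rmeas := by
  refine ⟨1, one_pos, ?_⟩
  intro k hk w₁ w₂ w₃ w₄ w₅ h1p h2p h3p h4p h5p h1a h2a h3a h4a h5a hprod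
    ψ₁ ψ₂ ψ₃ ψ₄ ψ₅ hm1 hm2 hm3 hm4 hm5
  have hw₁ : AEMeasurable w₁ (volume.restrict (Ioi (0:ℝ))) :=
    aemeasurable_restrict_of_antitoneOn measurableSet_Ioi (fun a ha b _ hab => h1a a b ha hab)
  have hw₂ : AEMeasurable w₂ (volume.restrict (Ioi (0:ℝ))) :=
    aemeasurable_restrict_of_antitoneOn measurableSet_Ioi (fun a ha b _ hab => h2a a b ha hab)
  have hw₃ : AEMeasurable w₃ (volume.restrict (Ioi (0:ℝ))) :=
    aemeasurable_restrict_of_antitoneOn measurableSet_Ioi (fun a ha b _ hab => h3a a b ha hab)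
  have hw₄ : AEMeasurable w₄ (volume.restrict (Ioi (0:ℝ))) :=
    aemeasurable_restrict_of_antitoneOn measurableSet_Ioi (fun a ha b _ hab => h4a a b ha hab)
  have hw₅ : AEMeasurable w₅ (volume.restrict (Ioi (0:ℝ))) :=
    aemeasurable_restrict_of_antitoneOn measurableSet_Ioi (fun a ha b _ hab => h5a a b ha hab)
  show eLpNorm (N5 k ψ₁ ψ₂ ψ₃ ψ₄ ψ₅) 2 rmeas ≤
    ENNReal.ofReal 1 * Wn w₁ ψ₁ * Wn w₂ ψ₂ * Wn w₃ ψ₃ * Wn w₄ ψ₄ * Wn w₅ ψ₅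
  by_cases htop : Wn w₁ ψ₁ = ⊤ ∨ Wn w₂ ψ₂ = ⊤ ∨ Wn w₃ ψ₃ = ⊤ ∨ Wn w₄ ψ₄ = ⊤
  · by_cases hzero : Wn w₁ ψ₁ = 0 ∨ Wn w₂ ψ₂ = 0 ∨ Wn w₃ ψ₃ = 0 ∨ Wn w₄ ψ₄ = 0 ∨ Wn w₅ ψ₅ = 0
    · have hLHS : eLpNorm (N5 k ψ₁ ψ₂ ψ₃ ψ₄ ψ₅) 2 rmeas = 0 := by
        apply lhs_zero
        rcases hzero with h | h | h | h | h
        · refine N5_zero₁₂ k hk ?_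
          filter_upwards [psi_ae_zero hw₁ h1p hm1 h] with t ht
          simp only [Pi.zero_apply] at ht ⊢
          simp [Re2, ht]
        · refine N5_zero₁₂ k hk ?_
          filter_upwards [psi_ae_zero hw₂ h2p hm2 h] with t ht
          simp only [Pi.zero_apply] at ht ⊢
          simp [Re2, ht]
        · refine N5_zero₃₄ k hk ?_
          filter_upwards [psi_ae_zero hw₃ h3p hm3 h] with t ht
          simp only [Pi.zero_apply] at ht ⊢
          simp [Re2, ht]
        · refine N5_zero₃₄ k hk ?_
          filter_upwards [psi_ae_zero hw₄ h4p hm4 h] with t ht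
          simp only [Pi.zero_apply] at ht ⊢
          simp [Re2, ht]
        · exact N5_zero₅ k hk (psi_ae_zero hw₅ h5p hm5 h)
      rw [hLHS]
      exact zero_le
    · push_neg at hzero
      obtain ⟨hz1, hz2, hz3, hz4, hz5⟩ := hzero
      rw [prod_top hz1 hz2 hz3 hz4 hz5 htop]
      exact le_top
  · push_neg at htop
    obtain ⟨ht1, ht2, ht3, ht4⟩ := htop
    set K : ℝ≥0∞ := Wn w₁ ψ₁ * Wn w₂ ψ₂ * (Wn w₃ ψ₃ * Wn w₄ ψ₄) with hKdef
    have hKt : K ≠ ⊤ := by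
      rw [hKdef]
      exact ENNReal.mul_ne_top (ENNReal.mul_ne_top ht1 ht2) (ENNReal.mul_ne_top ht3 ht4)
    set m : ℝ := K.toReal with hmdef
    have hKm : K = ENNReal.ofReal m := (ENNReal.ofReal_toReal hKt).symm
    have hpi : (0:ℝ) < Real.pi := Real.pi_pos
    have hc4 : ENNReal.ofReal (4 * Real.pi)⁻¹ ≤ 1 := by
      rw [show (1:ℝ≥0∞) = ENNReal.ofReal 1 by simp]
      apply ENNReal.ofReal_le_ofReal
      rw [inv_le_one_iff₀]
      right
      nlinarith [Real.pi_gt_three]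
    have hc2 : ENNReal.ofReal (2 * Real.pi)⁻¹ ≤ 1 := by
      rw [show (1:ℝ≥0∞) = ENNReal.ofReal 1 by simp]
      apply ENNReal.ofReal_le_ofReal
      rw [inv_le_one_iff₀]
      right
      nlinarith [Real.pi_gt_three]
    have hptk : ∀ r ∈ Ioi (0:ℝ), (‖N5 k ψ₁ ψ₂ ψ₃ ψ₄ ψ₅ r‖₊ : ℝ≥0∞)
        ≤ K * (ENNReal.ofReal (w₅ r) * ‖ψ₅ r‖₊) := by
      intro r hr
      rcases hk with rfl | rfl
      · refine (pt1 hw₁ hw₂ hw₃ hw₄ h1p h2p h3p h4p h5p h1a h2a h3a h4a hprod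
          hm1 hm2 hm3 hm4 hr).trans ?_
        refine mul_le_mul' (mul_le_mul' ?_ ?_) le_rfl
        · calc ENNReal.ofReal (4 * Real.pi)⁻¹ * (Wn w₁ ψ₁ * Wn w₂ ψ₂)
              ≤ 1 * (Wn w₁ ψ₁ * Wn w₂ ψ₂) := mul_le_mul_left hc4 _
            _ = Wn w₁ ψ₁ * Wn w₂ ψ₂ := one_mul _
        · calc ENNReal.ofReal (4 * Real.pi)⁻¹ * (Wn w₃ ψ₃ * Wn w₄ ψ₄)
              ≤ 1 * (Wn w₃ ψ₃ * Wn w₄ ψ₄) := mul_le_mul_left hc4 _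
            _ = Wn w₃ ψ₃ * Wn w₄ ψ₄ := one_mul _
      · refine (pt2 hw₁ hw₂ hw₃ hw₄ h1p h2p h3p h4p h5p h1a h2a h5a hprod
          hm1 hm2 hm3 hm4 hr).trans ?_
        refine mul_le_mul' (mul_le_mul' ?_ ?_) le_rfl
        · calc ENNReal.ofReal (4 * Real.pi)⁻¹ * (Wn w₁ ψ₁ * Wn w₂ ψ₂)
              ≤ 1 * (Wn w₁ ψ₁ * Wn w₂ ψ₂) := mul_le_mul_left hc4 _
            _ = Wn w₁ ψ₁ * Wn w₂ ψ₂ := one_mul _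
        · calc ENNReal.ofReal (2 * Real.pi)⁻¹ * (Wn w₃ ψ₃ * Wn w₄ ψ₄)
              ≤ 1 * (Wn w₃ ψ₃ * Wn w₄ ψ₄) := mul_le_mul_left hc2 _
            _ = Wn w₃ ψ₃ * Wn w₄ ψ₄ := one_mul _
    have hmem : ∀ᵐ r ∂rmeas, r ∈ Ioi (0:ℝ) :=
      (ae_restrict_mem measurableSet_Ioi).filter_mono
        (Measure.AbsolutelyContinuous.ae_le (withDensity_absolutelyContinuous _ _))
    have hae : ∀ᵐ r ∂rmeas, ‖N5 k ψ₁ ψ₂ ψ₃ ψ₄ ψ₅ r‖₊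
        ≤ ‖m • (((w₅ r : ℝ) : ℂ) * ψ₅ r)‖₊ := by
      filter_upwards [hmem] with r hr
      have hmn : (‖m • (((w₅ r : ℝ) : ℂ) * ψ₅ r)‖₊ : ℝ≥0∞)
          = ENNReal.ofReal m * (ENNReal.ofReal (w₅ r) * ‖ψ₅ r‖₊) := by
        rw [nnnorm_smul, ENNReal.coe_mul, Real.ennnorm_eq_ofReal ENNReal.toReal_nonneg,
          nnnorm_mul, ENNReal.coe_mul, Complex.nnnorm_real,
          Real.ennnorm_eq_ofReal (h5p r hr).le]
      have h2 : (‖N5 k ψ₁ ψ₂ ψ₃ ψ₄ ψ₅ r‖₊ : ℝ≥0∞)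
          ≤ (‖m • (((w₅ r : ℝ) : ℂ) * ψ₅ r)‖₊ : ℝ≥0∞) := by
        rw [hmn, ← hKm]
        exact hptk r hr
      exact_mod_cast h2
    calc eLpNorm (N5 k ψ₁ ψ₂ ψ₃ ψ₄ ψ₅) 2 rmeas
        ≤ eLpNorm (fun r => m • (((w₅ r : ℝ) : ℂ) * ψ₅ r)) 2 rmeas :=
          eLpNorm_mono_nnnorm_ae hae
      _ = eLpNorm (m • fun r => ((w₅ r : ℝ) : ℂ) * ψ₅ r) 2 rmeas := rfl
      _ = ‖m‖₊ • eLpNorm (fun r => ((w₅ r : ℝ) : ℂ) * ψ₅ r) 2 rmeas :=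
          eLpNorm_const_smul m _ 2 rmeas
      _ = ENNReal.ofReal m * Wn w₅ ψ₅ := by
          rw [ENNReal.smul_def, smul_eq_mul, Real.ennnorm_eq_ofReal ENNReal.toReal_nonneg]
          rfl
      _ = K * Wn w₅ ψ₅ := by rw [← hKm]
      _ = ENNReal.ofReal 1 * Wn w₁ ψ₁ * Wn w₂ ψ₂ * Wn w₃ ψ₃ * Wn w₄ ψ₄ * Wn w₅ ψ₅ := by
          rw [ENNReal.ofReal_one, hKdef]
          ring
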